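/- Let n ≥ 1, let A, B ∈ ℙ_n, and let t ∈ ℝ. Then X = A ♮_t B is the unique positive definite matrix X ∈ ℙ_n satisfying the equation A^{-1} # X = (A^{-1} # B)^t. -/

import Mathlib

open Matrix
open scoped ComplexOrder

/-- Real power `A^t = exp(t · log A)` of a Hermitian positive definite matrix, defined via
the functional calculus (spectral decomposition). -/
noncomputable def mpow {n : ℕ} (A : Matrix (Fin n) (Fin n) ℂ) (t : ℝ) :
    Matrix (Fin n) (Fin n) ℂ :=
  if hA : A.IsHermitian then
    (hA.eigenvectorUnitary : Matrix (Fin n) (Fin n) ℂ) *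
      Matrix.diagonal (fun i => ((hA.eigenvalues i ^ t : ℝ) : ℂ)) *
      (star (hA.eigenvectorUnitary : Matrix (Fin n) (Fin n) ℂ))
  else A

/-- Logarithm of a Hermitian positive definite matrix via the functional calculus. -/
noncomputable def mlog {n : ℕ} (A : Matrix (Fin n) (Fin n) ℂ) : Matrix (Fin n) (Fin n) ℂ :=
  if hA : A.IsHermitian then
    (hA.eigenvectorUnitary : Matrix (Fin n) (Fin n) ℂ) *
      Matrix.diagonal (fun i => ((Real.log (hA.eigenvalues i) : ℝ) : ℂ)) *
      (star (hA.eigenvectorUnitary : Matrix (Fin n) (Fin n) ℂ))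
  else A

/-- Metric geometric mean `A # B = A^{1/2} (A^{-1/2} B A^{-1/2})^{1/2} A^{1/2}`. -/
noncomputable def geomMean {n : ℕ} (A B : Matrix (Fin n) (Fin n) ℂ) :
    Matrix (Fin n) (Fin n) ℂ :=
  mpow A (1/2) * mpow (mpow A (-(1/2)) * B * mpow A (-(1/2))) (1/2) * mpow A (1/2)

/-- Weighted spectral geometric mean `A ♮_t B = (A⁻¹ # B)^t A (A⁻¹ # B)^t`. -/
noncomputable def spectralMean {n : ℕ} (t : ℝ) (A B : Matrix (Fin n) (Fin n) ℂ) :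
    Matrix (Fin n) (Fin n) ℂ :=
  mpow (geomMean A⁻¹ B) t * A * mpow (geomMean A⁻¹ B) t

section Aux

variable {n : ℕ}

lemma posDef_conj {A B : Matrix (Fin n) (Fin n) ℂ} (hA : A.PosDef) (hB : IsUnit B) :
    (Bᴴ * A * B).PosDef := by
  refine Matrix.PosDef.of_dotProduct_mulVec_pos (Matrix.isHermitian_conjTranspose_mul_mul B hA.1) fun x hx => ?_
  have hBx : B *ᵥ x ≠ 0 := by
    intro h
    apply hx
    have h2 := congrArg (fun v => B⁻¹ *ᵥ v) h
    simpa [Matrix.mulVec_mulVec, Matrix.nonsing_inv_mul B ((Matrix.isUnit_iff_isUnit_det B).mp hB)]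
      using h2
  have key := hA.dotProduct_mulVec_pos hBx
  calc (0:ℂ) < star (B *ᵥ x) ⬝ᵥ A *ᵥ B *ᵥ x := key
    _ = star x ⬝ᵥ (Bᴴ * A * B) *ᵥ x := by
        rw [Matrix.star_mulVec, Matrix.mulVec_mulVec, ← Matrix.dotProduct_mulVec,
          Matrix.mulVec_mulVec, ← Matrix.mul_assoc]

lemma mpow_isHermitian {A : Matrix (Fin n) (Fin n) ℂ} (hA : A.IsHermitian) (t : ℝ) :
    (mpow A t).IsHermitian := by
  rw [mpow, dif_pos hA]
  have : (star (hA.eigenvectorUnitary : Matrix (Fin n) (Fin n) ℂ)) =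
      (hA.eigenvectorUnitary : Matrix (Fin n) (Fin n) ℂ)ᴴ := rfl
  rw [this]
  refine Matrix.isHermitian_mul_mul_conjTranspose _ ?_
  rw [Matrix.isHermitian_diagonal_iff]
  intro i
  rw [isSelfAdjoint_iff, Complex.star_def, Complex.conj_ofReal]

lemma mpow_posDef {A : Matrix (Fin n) (Fin n) ℂ} (hA : A.PosDef) (t : ℝ) :
    (mpow A t).PosDef := by
  rw [mpow, dif_pos hA.1]
  have hd : (Matrix.diagonal fun i => ((hA.1.eigenvalues i ^ t : ℝ) : ℂ)).PosDef := by
    rw [Matrix.posDef_diagonal_iff]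
    intro i
    have := Real.rpow_pos_of_pos (hA.eigenvalues_pos i) t
    simpa using this
  have hU : IsUnit (star (hA.1.eigenvectorUnitary : Matrix (Fin n) (Fin n) ℂ)) :=
    ⟨⟨star (hA.1.eigenvectorUnitary : Matrix (Fin n) (Fin n) ℂ),
      (hA.1.eigenvectorUnitary : Matrix (Fin n) (Fin n) ℂ),
      (Matrix.mem_unitaryGroup_iff').mp hA.1.eigenvectorUnitary.2,
      (Matrix.mem_unitaryGroup_iff).mp hA.1.eigenvectorUnitary.2⟩, rfl⟩
  have h := posDef_conj hd hU
  have heq : (star (hA.1.eigenvectorUnitary : Matrix (Fin n) (Fin n) ℂ))ᴴ =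
      (hA.1.eigenvectorUnitary : Matrix (Fin n) (Fin n) ℂ) := by
    simp [Matrix.star_eq_conjTranspose]
  rwa [heq] at h

lemma mpow_mul_mpow {A : Matrix (Fin n) (Fin n) ℂ} (hA : A.PosDef) (s t : ℝ) :
    mpow A s * mpow A t = mpow A (s + t) := by
  rw [mpow, mpow, mpow, dif_pos hA.1, dif_pos hA.1, dif_pos hA.1]
  set U := (hA.1.eigenvectorUnitary : Matrix (Fin n) (Fin n) ℂ) with hUdef
  have hUU : star U * U = 1 := (Matrix.mem_unitaryGroup_iff').mp hA.1.eigenvectorUnitary.2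
  calc U * Matrix.diagonal (fun i => ((hA.1.eigenvalues i ^ s : ℝ) : ℂ)) * star U *
        (U * Matrix.diagonal (fun i => ((hA.1.eigenvalues i ^ t : ℝ) : ℂ)) * star U)
      = U * (Matrix.diagonal (fun i => ((hA.1.eigenvalues i ^ s : ℝ) : ℂ)) * ((star U * U) *
          Matrix.diagonal (fun i => ((hA.1.eigenvalues i ^ t : ℝ) : ℂ)))) * star U := by
        simp only [Matrix.mul_assoc]
    _ = U * Matrix.diagonal (fun i => ((hA.1.eigenvalues i ^ (s + t) : ℝ) : ℂ)) * star U := by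
        rw [hUU, Matrix.one_mul, Matrix.diagonal_mul_diagonal]
        have hfun : (fun i => ((hA.1.eigenvalues i ^ s : ℝ) : ℂ) *
            ((hA.1.eigenvalues i ^ t : ℝ) : ℂ)) =
            fun i => ((hA.1.eigenvalues i ^ (s + t) : ℝ) : ℂ) := by
          funext i
          rw [← Complex.ofReal_mul, ← Real.rpow_add (hA.eigenvalues_pos i)]
        rw [hfun, Matrix.mul_assoc]

lemma mpow_zero {A : Matrix (Fin n) (Fin n) ℂ} (hA : A.IsHermitian) : mpow A 0 = 1 := by
  rw [mpow, dif_pos hA]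
  have : (Matrix.diagonal fun i => ((hA.eigenvalues i ^ (0 : ℝ) : ℝ) : ℂ)) = 1 := by
    rw [← Matrix.diagonal_one]
    congr 1
    ext i
    simp [Real.rpow_zero]
  rw [this, Matrix.mul_one]
  exact (Matrix.mem_unitaryGroup_iff).mp hA.eigenvectorUnitary.2

lemma mpow_one {A : Matrix (Fin n) (Fin n) ℂ} (hA : A.IsHermitian) : mpow A 1 = A := by
  rw [mpow, dif_pos hA]
  have hfun : (fun i => ((hA.eigenvalues i ^ (1 : ℝ) : ℝ) : ℂ)) =
      (Complex.ofReal ∘ hA.eigenvalues) := by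
    funext i
    simp [Real.rpow_one, Function.comp]
  rw [hfun]
  exact hA.spectral_theorem.symm

lemma mpow_half_mul_self {A : Matrix (Fin n) (Fin n) ℂ} (hA : A.PosDef) :
    mpow A (1/2) * mpow A (1/2) = A := by
  rw [mpow_mul_mpow hA]
  norm_num
  exact mpow_one hA.1

lemma mpow_half_mul_neg_half {A : Matrix (Fin n) (Fin n) ℂ} (hA : A.PosDef) :
    mpow A (1/2) * mpow A (-(1/2)) = 1 := by
  rw [mpow_mul_mpow hA]
  norm_num
  exact mpow_zero hA.1

lemma mpow_neg_half_mul_half {A : Matrix (Fin n) (Fin n) ℂ} (hA : A.PosDef) :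
    mpow A (-(1/2)) * mpow A (1/2) = 1 := by
  rw [mpow_mul_mpow hA]
  norm_num
  exact mpow_zero hA.1

lemma geomMean_posDef {M X : Matrix (Fin n) (Fin n) ℂ} (hM : M.PosDef) (hX : X.PosDef) :
    (geomMean M X).PosDef := by
  rw [geomMean]
  set Q := mpow M (-(1/2)) with hQdef
  have hQ : Q.PosDef := mpow_posDef hM _
  have hC : (Q * X * Q).PosDef := by
    have := posDef_conj hX hQ.isUnit
    rwa [hQ.1.eq] at this
  have hS : (mpow (Q * X * Q) (1/2)).PosDef := mpow_posDef hC _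
  have hR : (mpow M (1/2)).PosDef := mpow_posDef hM _
  have := posDef_conj hS hR.isUnit
  rwa [hR.1.eq] at this

lemma geomMean_riccati {M X : Matrix (Fin n) (Fin n) ℂ} (hM : M.PosDef) (hX : X.PosDef) :
    geomMean M X * M⁻¹ * geomMean M X = X := by
  rw [geomMean]
  set R := mpow M (1/2) with hRdef
  set Q := mpow M (-(1/2)) with hQdef
  have hQ : Q.PosDef := mpow_posDef hM _
  have hC : (Q * X * Q).PosDef := by
    have := posDef_conj hX hQ.isUnit
    rwa [hQ.1.eq] at this
  set S := mpow (Q * X * Q) (1/2) with hSdef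
  have hRQ : R * Q = 1 := mpow_half_mul_neg_half hM
  have hQR : Q * R = 1 := mpow_neg_half_mul_half hM
  have hRR : R * R = M := mpow_half_mul_self hM
  have hSS : S * S = Q * X * Q := by
    rw [hSdef, mpow_mul_mpow hC]
    norm_num
    exact mpow_one hC.1
  have hMinv : M⁻¹ = Q * Q := by
    rw [← hRR, Matrix.mul_inv_rev]
    have : R⁻¹ = Q := Matrix.inv_eq_right_inv hRQ
    rw [this]
  rw [hMinv]
  calc R * S * R * (Q * Q) * (R * S * R)
      = R * S * (R * Q) * ((Q * R) * S * R) := by simp only [Matrix.mul_assoc]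
    _ = R * (S * S) * R := by
        rw [hRQ, hQR, Matrix.mul_one, Matrix.one_mul]
        simp only [Matrix.mul_assoc]
    _ = (R * Q) * X * (Q * R) := by rw [hSS]; simp only [Matrix.mul_assoc]
    _ = X := by rw [hRQ, hQR, Matrix.one_mul, Matrix.mul_one]

lemma posDef_sq_cancel {A G H : Matrix (Fin n) (Fin n) ℂ} (hA : A.PosDef) (hG : G.PosDef)
    (hH : H.PosDef) (h : G * A * G = H * A * H) : G = H := by
  set R := mpow A (1/2) with hRdef
  have hR : R.PosDef := mpow_posDef hA _
  have hRR : R * R = A := mpow_half_mul_self hA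
  have hRGR : (R * G * R).PosDef := by
    have := posDef_conj hG hR.isUnit
    rwa [hR.1.eq] at this
  have hRHR : (R * H * R).PosDef := by
    have := posDef_conj hH hR.isUnit
    rwa [hR.1.eq] at this
  have hsq : (R * G * R) ^ 2 = (R * H * R) ^ 2 := by
    have e1 : (R * G * R) ^ 2 = R * (G * A * G) * R := by
      rw [pow_two, ← hRR]; simp only [Matrix.mul_assoc]
    have e2 : (R * H * R) ^ 2 = R * (H * A * H) * R := by
      rw [pow_two, ← hRR]; simp only [Matrix.mul_assoc]
    rw [e1, e2, h]
  have heq : R * G * R = R * H * R :=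
    by open scoped MatrixOrder in exact (CFC.sq_eq_sq_iff (R * G * R) (R * H * R) hRGR.posSemidef.nonneg hRHR.posSemidef.nonneg).mp hsq
  have h1 : R * G = R * H := hR.isUnit.mul_right_cancel (by
    simpa only [Matrix.mul_assoc] using heq)
  exact hR.isUnit.mul_left_cancel h1

end Aux

theorem spectralMean_unique_solution {n : ℕ} (hn : 1 ≤ n) (A B : Matrix (Fin n) (Fin n) ℂ)
    (hA : A.PosDef) (hB : B.PosDef) (t : ℝ) :
    (spectralMean t A B).PosDef ∧
    geomMean A⁻¹ (spectralMean t A B) = mpow (geomMean A⁻¹ B) t ∧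
    ∀ X : Matrix (Fin n) (Fin n) ℂ, X.PosDef →
      geomMean A⁻¹ X = mpow (geomMean A⁻¹ B) t → X = spectralMean t A B := by
  have hAinv : (A⁻¹).PosDef := hA.inv
  have hAA : A⁻¹⁻¹ = A := Matrix.nonsing_inv_nonsing_inv A
    ((Matrix.isUnit_iff_isUnit_det A).mp hA.isUnit)
  have hG0 : (geomMean A⁻¹ B).PosDef := geomMean_posDef hAinv hB
  set P := mpow (geomMean A⁻¹ B) t with hPdef
  have hP : P.PosDef := mpow_posDef hG0 _
  have hSM : spectralMean t A B = P * A * P := rfl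
  have hSMpos : (spectralMean t A B).PosDef := by
    rw [hSM]
    have := posDef_conj hA hP.isUnit
    rwa [hP.1.eq] at this
  refine ⟨hSMpos, ?_, ?_⟩
  · -- geomMean A⁻¹ (P * A * P) = P
    have hG : (geomMean A⁻¹ (spectralMean t A B)).PosDef := geomMean_posDef hAinv hSMpos
    have hric := geomMean_riccati hAinv hSMpos
    rw [hAA] at hric
    refine posDef_sq_cancel hA hG hP ?_
    rw [hric, hSM]
  · intro X hX hGX
    have hric := geomMean_riccati hAinv hX
    rw [hAA, hGX] at hric
    rw [hSM, ← hric]
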